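/- Let μ be a probability measure, p*, p bounded measurable with 0 ≤ p ≤ U, ∫ p* dμ = ∫ p dμ = 1, and q = p − 1. Then |M² ∫ log(1 + q/M)((1/M)p* + (M−1)/M) dμ − (−½‖p − p*‖²_{L²(μ)} + ½‖p*‖²_{L²(μ)} − ½)| ≤ C/M for a constant C depending only on U and ‖p*‖_∞, for all M ≥ 2. -/

import Mathlib

open MeasureTheory

open Set

lemma my_div_le_div {a b c : ℝ} (h : a ≤ b) (hc : 0 < c) : a / c ≤ b / c := by
  gcongr

lemma hasDerivAt_phi (y : ℝ) (hy : (-1:ℝ) < y) :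
    HasDerivAt (fun y => Real.log (1+y) - y + y^2/2) (1/(1+y) - 1 + y) y := by
  have h1 : HasDerivAt (fun y : ℝ => 1 + y) 1 y := by
    simpa using (hasDerivAt_id y).const_add 1
  have h2 : HasDerivAt (fun y : ℝ => Real.log (1+y)) (1/(1+y)) y := by
    have := (Real.hasDerivAt_log (by linarith : 1 + y ≠ 0)).comp y h1
    simpa [one_div, Function.comp_def] using this
  have h3 : HasDerivAt (fun y : ℝ => y^2/2) y y := by
    have := (hasDerivAt_pow 2 y).div_const 2
    simpa using this
  exact (h2.sub (hasDerivAt_id y)).add h3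

lemma phi_bound (y : ℝ) (hy : -(1/2:ℝ) ≤ y) :
    |Real.log (1+y) - y + y^2/2| ≤ 3 * |y|^3 := by
  set φ : ℝ → ℝ := fun y => Real.log (1+y) - y + y^2/2 with hφ
  have key : ∀ t ∈ Ici (-(1/2):ℝ), (-1:ℝ) < t := fun t ht => by
    simp only [mem_Ici] at ht; linarith
  have hmono : MonotoneOn φ (Ici (-(1/2):ℝ)) := by
    apply monotoneOn_of_deriv_nonneg (convex_Ici _)
    · exact fun t ht => ((hasDerivAt_phi t (key t ht)).differentiableAt).continuousAt.continuousWithinAt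
    · intro t ht
      rw [interior_Ici] at ht
      exact ((hasDerivAt_phi t (by simp only [mem_Ioi] at ht; linarith)).differentiableAt).differentiableWithinAt
    · intro t ht
      rw [interior_Ici] at ht
      simp only [mem_Ioi] at ht
      have h1 : (-1:ℝ) < t := by linarith
      have h1' : (0:ℝ) < 1 + t := by linarith
      rw [(hasDerivAt_phi t h1).deriv]
      have : 1/(1+t) - 1 + t = t^2/(1+t) := by field_simp; ring
      rw [this]
      positivity
  have hanti : AntitoneOn (fun t => φ t - 3*t^3) (Ici (-(1/2):ℝ)) := by
    apply antitoneOn_of_deriv_nonpos (convex_Ici _)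
    · apply ContinuousOn.sub
      · exact fun t ht => ((hasDerivAt_phi t (key t ht)).differentiableAt).continuousAt.continuousWithinAt
      · exact (continuous_const.mul (continuous_pow 3)).continuousOn
    · intro t ht
      rw [interior_Ici] at ht
      have h1 : (-1:ℝ) < t := by simp only [mem_Ioi] at ht; linarith
      exact ((hasDerivAt_phi t h1).differentiableAt.sub
        ((differentiable_const _).mul (differentiable_pow 3)).differentiableAt).differentiableWithinAt
    · intro t ht
      rw [interior_Ici] at ht
      simp only [mem_Ioi] at ht
      have h1 : (-1:ℝ) < t := by linarith
      have h1' : (0:ℝ) < 1 + t := by linarith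
      have hd : HasDerivAt (fun t => φ t - 3*t^3) (1/(1+t) - 1 + t - 3*(3*t^2)) t := by
        have h2 : HasDerivAt (fun t : ℝ => 3*t^3) (3*(3*t^2)) t := by
          have := (hasDerivAt_pow 3 t).const_mul 3
          simpa using this
        exact (hasDerivAt_phi t h1).sub h2
      rw [hd.deriv]
      have he : 1/(1+t) - 1 + t - 3*(3*t^2) = t^2 * (1/(1+t) - 9) := by
        field_simp
        ring
      rw [he]
      have h9 : 1/(1+t) ≤ 9 := by
        rw [div_le_iff₀ h1']; linarith
      have : 1/(1+t) - 9 ≤ 0 := by linarith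
      exact mul_nonpos_of_nonneg_of_nonpos (sq_nonneg t) this
  have h0 : φ 0 = 0 := by simp [hφ]
  have hys : y ∈ Ici (-(1/2):ℝ) := hy
  have h0s : (0:ℝ) ∈ Ici (-(1/2):ℝ) := by norm_num
  rcases le_or_gt 0 y with h | h
  · have hlo : 0 ≤ φ y := by
      have := hmono h0s hys h
      simpa [h0] using this
    have hhi : φ y - 3*y^3 ≤ 0 := by
      have := hanti h0s hys h
      simpa [h0] using this
    rw [abs_of_nonneg hlo, abs_of_nonneg h]
    linarith
  · have hhi : φ y ≤ 0 := by
      have := hmono hys h0s h.le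
      simpa [h0] using this
    have hlo : 0 ≤ φ y - 3*y^3 := by
      have := hanti hys h0s h.le
      simpa [h0] using this
    rw [abs_of_nonpos hhi, abs_of_neg h]
    have : (-y)^3 = -(y^3) := by ring
    rw [this]
    linarith

set_option maxHeartbeats 1000000 in
/-- Quantitative asymptotics of the expected pseudo-log-likelihood:
`|M² ∫ log(1+q/M)((1/M)p* + (M−1)/M) dμ − (−½‖p−p*‖² + ½‖p*‖² − ½)| ≤ C/M`
for a constant `C` depending only on the bounds `U` (on `p`) and `B` (on `p*`). -/
theorem pseudolikelihood_asymptotics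
    {α : Type*} [MeasurableSpace α] (U B : ℝ) (hU : 0 < U) (hB : 0 < B) :
    ∃ C : ℝ, 0 ≤ C ∧
      ∀ (μ : Measure α), IsProbabilityMeasure μ →
      ∀ (p pstar : α → ℝ), Measurable p → Measurable pstar →
        (∀ z, 0 ≤ p z) → (∀ z, p z ≤ U) → (∀ z, |pstar z| ≤ B) →
        (∫ z, p z ∂μ = 1) → (∫ z, pstar z ∂μ = 1) →
        ∀ M : ℕ, 2 ≤ M →
          |(M : ℝ) ^ 2 * ∫ z, Real.log (1 + (p z - 1) / M)
              * ((1 / M) * pstar z + ((M : ℝ) - 1) / M) ∂μ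
            - (-(1 / 2) * ∫ z, (p z - pstar z) ^ 2 ∂μ
                + (1 / 2) * ∫ z, (pstar z) ^ 2 ∂μ - 1 / 2)|
            ≤ C / M := by
  obtain ⟨K, hK⟩ : ∃ K : ℝ, K = U + 1 := ⟨U + 1, rfl⟩
  have hKpos : 0 < K := by rw [hK]; positivity
  refine ⟨(B+1) * (3*K^3 + K^2/2), by
    have h3 : 0 < K^3 := pow_pos hKpos 3
    have h2 : 0 < K^2 := pow_pos hKpos 2
    nlinarith, ?_⟩
  intro μ hμ p pstar hp hps hp0 hpU hpsB hip hips M hM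
  have hM2 : (2:ℝ) ≤ (M:ℝ) := by exact_mod_cast hM
  have hMpos : (0:ℝ) < (M:ℝ) := by linarith
  have hMne : (M:ℝ) ≠ 0 := ne_of_gt hMpos
  -- bound on q = p - 1
  have hqK : ∀ z, |p z - 1| ≤ K := by
    intro z
    rw [abs_le]
    constructor
    · have := hp0 z; rw [hK]; linarith
    · have := hpU z; rw [hK]; linarith
  -- integrability helper
  have hInt : ∀ (f : α → ℝ) (c : ℝ), Measurable f → (∀ z, |f z| ≤ c) → Integrable f μ := by
    intro f c hf hfc
    exact (integrable_const c).mono' hf.aestronglyMeasurable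
      (Filter.Eventually.of_forall (fun z => by simpa [Real.norm_eq_abs] using hfc z))
  -- quantity -1/2 ≤ (p z - 1)/M
  have hy_lb : ∀ z, -(1/2:ℝ) ≤ (p z - 1)/(M:ℝ) := by
    intro z
    rw [le_div_iff₀ hMpos]
    have := hp0 z
    nlinarith
  -- the pointwise correction term bound
  have phi_bd : ∀ z, |Real.log (1 + (p z - 1)/(M:ℝ)) - (p z - 1)/(M:ℝ) + ((p z - 1)/(M:ℝ))^2/2|
      ≤ 3 * |(p z - 1)/(M:ℝ)|^3 := fun z => phi_bound _ (hy_lb z)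
  -- integrands
  set f : α → ℝ := fun z => Real.log (1 + (p z - 1) / M)
      * ((1 / M) * pstar z + ((M : ℝ) - 1) / M) with hf_def
  set g : α → ℝ := fun z => (-(1/2)*(p z - pstar z)^2 + (1/2)*(pstar z)^2)
      + ((p z - pstar z) + (((M:ℝ)-1)*(p z - 1) - 1/2)) with hg_def
  -- measurability of f
  have hfm : Measurable f := by
    apply Measurable.mul
    · exact Real.measurable_log.comp
        (((hp.sub measurable_const).div_const _).const_add 1)
    · exact ((hps.const_mul _).add measurable_const)
  -- bound on |log(1 + q/M)|
  have hlog_bd : ∀ z, |Real.log (1 + (p z - 1)/(M:ℝ))| ≤ K + K^2/2 + 3*K^3 := by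
    intro z
    have hyK : |(p z - 1)/(M:ℝ)| ≤ K := by
      rw [abs_div, abs_of_pos hMpos, div_le_iff₀ hMpos]
      calc |p z - 1| ≤ K := hqK z
        _ ≤ K * M := by nlinarith
    have h1 := phi_bd z
    have h2 : |Real.log (1 + (p z - 1)/(M:ℝ))| ≤
        |Real.log (1 + (p z - 1)/(M:ℝ)) - (p z - 1)/(M:ℝ) + ((p z - 1)/(M:ℝ))^2/2|
        + |(p z - 1)/(M:ℝ)| + |(p z - 1)/(M:ℝ)|^2/2 := by
      have := abs_add_le (Real.log (1 + (p z - 1)/(M:ℝ)) - (p z - 1)/(M:ℝ) + ((p z - 1)/(M:ℝ))^2/2)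
        ((p z - 1)/(M:ℝ) - ((p z - 1)/(M:ℝ))^2/2)
      have habs : |(p z - 1)/(M:ℝ) - ((p z - 1)/(M:ℝ))^2/2| ≤ |(p z - 1)/(M:ℝ)| + |(p z - 1)/(M:ℝ)|^2/2 := by
        have e : |((p z - 1)/(M:ℝ))^2/2| = |(p z - 1)/(M:ℝ)|^2/2 := by
          rw [abs_div, abs_pow]; norm_num
        calc |(p z - 1)/(M:ℝ) - ((p z - 1)/(M:ℝ))^2/2|
            ≤ |(p z - 1)/(M:ℝ)| + |((p z - 1)/(M:ℝ))^2/2| := abs_sub _ _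
          _ = |(p z - 1)/(M:ℝ)| + |(p z - 1)/(M:ℝ)|^2/2 := by rw [e]
      have heq : Real.log (1 + (p z - 1)/(M:ℝ)) - (p z - 1)/(M:ℝ) + ((p z - 1)/(M:ℝ))^2/2
          + ((p z - 1)/(M:ℝ) - ((p z - 1)/(M:ℝ))^2/2) = Real.log (1 + (p z - 1)/(M:ℝ)) := by ring
      rw [heq] at this
      linarith
    have h3 : |(p z - 1)/(M:ℝ)|^3 ≤ K^3 := by
      apply pow_le_pow_left₀ (abs_nonneg _) hyK
    have h4 : |(p z - 1)/(M:ℝ)|^2 ≤ K^2 := by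
      apply pow_le_pow_left₀ (abs_nonneg _) hyK
    linarith
  -- bounds on the weight
  have hw_bd : ∀ z, |(1/(M:ℝ)) * pstar z + ((M:ℝ) - 1)/(M:ℝ)| ≤ B + 1 := by
    intro z
    calc |(1/(M:ℝ)) * pstar z + ((M:ℝ) - 1)/(M:ℝ)|
        ≤ |(1/(M:ℝ)) * pstar z| + |((M:ℝ) - 1)/(M:ℝ)| := abs_add_le _ _
      _ ≤ B + 1 := by
          have h1 : |(1/(M:ℝ)) * pstar z| = (1/(M:ℝ)) * |pstar z| := by
            rw [abs_mul, abs_of_pos (by positivity : (0:ℝ) < 1/(M:ℝ))]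
          have h2 : |((M:ℝ) - 1)/(M:ℝ)| = ((M:ℝ)-1)/(M:ℝ) := abs_of_nonneg (by
            apply div_nonneg (by linarith) hMpos.le)
          rw [h1, h2]
          have h3 : (1/(M:ℝ)) * |pstar z| ≤ 1 * B := by
            apply mul_le_mul _ (hpsB z) (abs_nonneg _) (by norm_num)
            rw [div_le_one hMpos]; linarith
          have h4 : ((M:ℝ)-1)/(M:ℝ) ≤ 1 := by
            rw [div_le_one hMpos]; linarith
          linarith
  have hfb : ∀ z, |f z| ≤ (K + K^2/2 + 3*K^3) * (B + 1) := by
    intro z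
    rw [hf_def, abs_mul]
    exact mul_le_mul (hlog_bd z) (hw_bd z) (abs_nonneg _) (by positivity)
  have hfi : Integrable f μ := hInt f _ hfm hfb
  -- integrability of pieces of g
  have hi_sq : Integrable (fun z => (p z - pstar z)^2) μ := by
    apply hInt _ ((U+B)^2) ((hp.sub hps).pow_const 2)
    intro z
    rw [abs_pow]
    apply pow_le_pow_left₀ (abs_nonneg _)
    calc |p z - pstar z| ≤ |p z| + |pstar z| := abs_sub _ _
      _ ≤ U + B := by
          have h1 : |p z| ≤ U := by rw [abs_of_nonneg (hp0 z)]; exact hpU z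
          linarith [hpsB z]
  have hi_psq : Integrable (fun z => (pstar z)^2) μ := by
    apply hInt _ (B^2) (hps.pow_const 2)
    intro z
    rw [abs_pow]
    exact pow_le_pow_left₀ (abs_nonneg _) (hpsB z) 2
  have hi_p : Integrable p μ := hInt p U hp (fun z => by rw [abs_of_nonneg (hp0 z)]; exact hpU z)
  have hi_ps : Integrable pstar μ := hInt pstar B hps hpsB
  have hi_g : Integrable g μ := by
    apply hInt g ((1/2)*(U+B)^2 + (1/2)*B^2 + (U+B) + ((M:ℝ)-1)*K + 1/2)
    · apply Measurable.add
      · exact ((((hp.sub hps).pow_const 2).const_mul _).add ((hps.pow_const 2).const_mul _))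
      · exact (hp.sub hps).add (((hp.sub measurable_const).const_mul _).sub measurable_const)
    · intro z
      simp only [hg_def]
      obtain ⟨hb1, hb2⟩ := abs_le.mp (hpsB z)
      have hpz0 := hp0 z
      have hpzU := hpU z
      have hM1 : (0:ℝ) ≤ (M:ℝ) - 1 := by linarith
      have c1 : (p z - pstar z)^2 ≤ (U+B)^2 :=
        sq_le_sq' (by linarith) (by linarith)
      have c2 : (pstar z)^2 ≤ B^2 := sq_le_sq' (by linarith) hb2
      have c3a : -(U+B) ≤ p z - pstar z := by linarith
      have c3b : p z - pstar z ≤ U+B := by linarith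
      obtain ⟨d1, d2⟩ := abs_le.mp (hqK z)
      have c4b : ((M:ℝ)-1)*(p z - 1) ≤ ((M:ℝ)-1)*K := mul_le_mul_of_nonneg_left d2 hM1
      have c4a : -(((M:ℝ)-1)*K) ≤ ((M:ℝ)-1)*(p z - 1) := by
        have := mul_le_mul_of_nonneg_left d1 hM1
        have e : ((M:ℝ)-1)*(-K) = -(((M:ℝ)-1)*K) := by ring
        linarith
      rw [abs_le]
      constructor
      · linarith [sq_nonneg (p z - pstar z), sq_nonneg (pstar z), sq_nonneg B, sq_nonneg (U+B)]
      · linarith [sq_nonneg (p z - pstar z), sq_nonneg (pstar z), sq_nonneg B, sq_nonneg (U+B)]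
  -- Step 1 : ∫ g = target
  have hTg : ∫ z, g z ∂μ = -(1 / 2) * ∫ z, (p z - pstar z) ^ 2 ∂μ
      + (1 / 2) * ∫ z, (pstar z) ^ 2 ∂μ - 1 / 2 := by
    have j0a : Integrable (fun z => -(1/2:ℝ) * (p z - pstar z)^2) μ := hi_sq.const_mul _
    have j0b : Integrable (fun z => (1/2:ℝ) * (pstar z)^2) μ := hi_psq.const_mul _
    have j1 : Integrable (fun z => -(1/2:ℝ) * (p z - pstar z)^2 + 1/2 * (pstar z)^2) μ :=
      j0a.add j0b
    have j2 : Integrable (fun z => p z - pstar z) μ := hi_p.sub hi_ps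
    have j5 : Integrable (fun z => p z - 1) μ := hi_p.sub (integrable_const 1)
    have j3a : Integrable (fun z => ((M:ℝ)-1) * (p z - 1)) μ := j5.const_mul _
    have j3 : Integrable (fun z => ((M:ℝ)-1) * (p z - 1) - 1/2) μ := j3a.sub (integrable_const _)
    have j4 : Integrable (fun z => (p z - pstar z) + (((M:ℝ)-1) * (p z - 1) - 1/2)) μ := j2.add j3
    simp only [hg_def]
    rw [integral_add j1 j4, integral_add j0a j0b, integral_add j2 j3,
      integral_sub hi_p hi_ps, integral_sub j3a (integrable_const _),
      integral_const_mul, integral_const_mul, integral_const_mul,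
      integral_sub hi_p (integrable_const 1)]
    simp only [hip, hips, integral_const, measure_univ, probReal_univ, smul_eq_mul, one_mul]
    ring
  -- Step 2: rewrite M^2 * ∫ f as ∫ M^2 * f
  have hMf : (M:ℝ)^2 * ∫ z, f z ∂μ = ∫ z, (M:ℝ)^2 * f z ∂μ := (integral_const_mul _ _).symm
  -- Step 3: pointwise bound
  have hpt : ∀ z, |(M:ℝ)^2 * f z - g z| ≤ ((B+1) * (3*K^3 + K^2/2)) / M := by
    intro z
    set y : ℝ := (p z - 1)/(M:ℝ) with hy_def
    set w : ℝ := (1/(M:ℝ)) * pstar z + ((M:ℝ) - 1)/(M:ℝ) with hw_def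
    have hsplit : (M:ℝ)^2 * f z - g z
        = (M:ℝ)^2 * (Real.log (1 + y) - y + y^2/2) * w
          + ((M:ℝ)^2 * (y - y^2/2) * w - g z) := by
      rw [hf_def]
      ring
    have hmain : (M:ℝ)^2 * (y - y^2/2) * w - g z
        = -(p z - 1)^2 * pstar z/(2*(M:ℝ)) + (p z - 1)^2/(2*(M:ℝ)) := by
      rw [hy_def, hw_def, hg_def]
      field_simp
      ring
    rw [hsplit, hmain]
    have hb1 : |(M:ℝ)^2 * (Real.log (1 + y) - y + y^2/2) * w| ≤ 3*K^3*(B+1)/(M:ℝ) := by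
      rw [abs_mul, abs_mul]
      have e1 : |(M:ℝ)^2| = (M:ℝ)^2 := abs_of_pos (by positivity)
      rw [e1]
      have e2 : |Real.log (1 + y) - y + y^2/2| ≤ 3 * |y|^3 := phi_bd z
      have e3 : |y|^3 ≤ K^3/(M:ℝ)^3 := by
        have : |y| ≤ K/(M:ℝ) := by
          rw [hy_def, abs_div, abs_of_pos hMpos]
          exact my_div_le_div (hqK z) hMpos
        calc |y|^3 ≤ (K/(M:ℝ))^3 := pow_le_pow_left₀ (abs_nonneg _) this 3
          _ = K^3/(M:ℝ)^3 := by rw [div_pow]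
      calc (M:ℝ)^2 * |Real.log (1 + y) - y + y^2/2| * |w|
          ≤ (M:ℝ)^2 * (3 * (K^3/(M:ℝ)^3)) * (B+1) := by
            apply mul_le_mul _ (hw_bd z) (abs_nonneg _) (by positivity)
            apply mul_le_mul_of_nonneg_left _ (by positivity)
            calc |Real.log (1 + y) - y + y^2/2| ≤ 3 * |y|^3 := e2
              _ ≤ 3 * (K^3/(M:ℝ)^3) := by linarith
        _ = 3*K^3*(B+1)/(M:ℝ) := by field_simp
    have hb2 : |-(p z - 1)^2 * pstar z/(2*(M:ℝ)) + (p z - 1)^2/(2*(M:ℝ))|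
        ≤ K^2*(B+1)/(2*(M:ℝ)) := by
      have e1 : |-(p z - 1)^2 * pstar z/(2*(M:ℝ))| ≤ K^2*B/(2*(M:ℝ)) := by
        rw [abs_div, abs_mul, abs_neg, abs_pow]
        rw [abs_of_pos (by positivity : (0:ℝ) < 2*(M:ℝ))]
        apply my_div_le_div _ (by positivity)
        apply mul_le_mul _ (hpsB z) (abs_nonneg _) (by positivity)
        exact pow_le_pow_left₀ (abs_nonneg _) (hqK z) 2
      have e2 : |(p z - 1)^2/(2*(M:ℝ))| ≤ K^2/(2*(M:ℝ)) := by
        rw [abs_div, abs_pow, abs_of_pos (by positivity : (0:ℝ) < 2*(M:ℝ))]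
        apply my_div_le_div _ (by positivity)
        exact pow_le_pow_left₀ (abs_nonneg _) (hqK z) 2
      calc |-(p z - 1)^2 * pstar z/(2*(M:ℝ)) + (p z - 1)^2/(2*(M:ℝ))|
          ≤ |-(p z - 1)^2 * pstar z/(2*(M:ℝ))| + |(p z - 1)^2/(2*(M:ℝ))| := abs_add_le _ _
        _ ≤ K^2*B/(2*(M:ℝ)) + K^2/(2*(M:ℝ)) := by linarith
        _ = K^2*(B+1)/(2*(M:ℝ)) := by ring
    calc |(M:ℝ)^2 * (Real.log (1 + y) - y + y^2/2) * w
          + (-(p z - 1)^2 * pstar z/(2*(M:ℝ)) + (p z - 1)^2/(2*(M:ℝ)))|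
        ≤ |(M:ℝ)^2 * (Real.log (1 + y) - y + y^2/2) * w|
          + |-(p z - 1)^2 * pstar z/(2*(M:ℝ)) + (p z - 1)^2/(2*(M:ℝ))| := abs_add_le _ _
      _ ≤ 3*K^3*(B+1)/(M:ℝ) + K^2*(B+1)/(2*(M:ℝ)) := by linarith
      _ = ((B+1) * (3*K^3 + K^2/2)) / M := by field_simp
  -- Step 4 : conclude
  have hi_Mf : Integrable (fun z => (M:ℝ)^2 * f z) μ := hfi.const_mul _
  have hi_diff : Integrable (fun z => (M:ℝ)^2 * f z - g z) μ := hi_Mf.sub hi_g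
  have key : |∫ z, ((M:ℝ)^2 * f z - g z) ∂μ| ≤ ((B+1) * (3*K^3 + K^2/2)) / M := by
    calc |∫ z, ((M:ℝ)^2 * f z - g z) ∂μ| ≤ ∫ z, |(M:ℝ)^2 * f z - g z| ∂μ := by
          simpa [Real.norm_eq_abs] using
            norm_integral_le_integral_norm (μ := μ) (fun z => (M:ℝ)^2 * f z - g z)
      _ ≤ ∫ z, (((B+1) * (3*K^3 + K^2/2)) / M : ℝ) ∂μ := by
          apply integral_mono hi_diff.abs (integrable_const _)
          exact hpt
      _ = ((B+1) * (3*K^3 + K^2/2)) / M := by simp [measure_univ]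
  rw [integral_sub hi_Mf hi_g] at key
  rw [← hMf, hTg] at key
  exact key
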